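/- There exists a universal constant c > 0 such that for every real C ≥ 1 and all integers m ≥ 2, t ≥ 1 with m ≥ c · t² · ln(m), there exist partitions B⁽¹⁾,…,B⁽ᵐ⁾ : [m] → [t] with the following property: for every partial partition of the items into t buckets, i.e., every function B : [m] → [t] ∪ {⊥}, there exists ℓ ∈ [m] such that for all s, s' ∈ [t], if |B⁻¹(s)| ≤ C·m/t then |(B⁽ˡ⁾)⁻¹(s') ∩ B⁻¹(s)| ≤ 3C·m/t². -/

import Mathlib

open Finset Real

-- (r/e)^r ≤ r!
lemma aux_pow_self_le_exp_mul_factorial (r : ℕ) :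
    (r : ℝ) ^ r ≤ Real.exp 1 ^ r * (Nat.factorial r) := by
  induction r with
  | zero => simp
  | succ n ih =>
    have hstep : ((n : ℝ) + 1) ^ n ≤ Real.exp 1 * (n : ℝ) ^ n := by
      rcases Nat.eq_zero_or_pos n with h0 | hn
      · subst h0; simpa using Real.one_le_exp (le_refl 1) |>.trans (le_refl _)
      · have hn' : (0 : ℝ) < n := by exact_mod_cast hn
        have h1 : (n : ℝ) + 1 ≤ (n : ℝ) * Real.exp (1 / n) := by
          have h := Real.add_one_le_exp (1 / (n : ℝ))
          have h2 : (n : ℝ) * (1 / n) = 1 := by field_simp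
          nlinarith [mul_le_mul_of_nonneg_left h hn'.le]
        calc ((n : ℝ) + 1) ^ n ≤ ((n : ℝ) * Real.exp (1 / n)) ^ n :=
              pow_le_pow_left₀ (by positivity) h1 n
          _ = (n : ℝ) ^ n * Real.exp (1 / n) ^ n := mul_pow _ _ n
          _ = (n : ℝ) ^ n * Real.exp 1 := by
              rw [← Real.exp_nat_mul]
              congr 2
              field_simp
          _ = Real.exp 1 * (n : ℝ) ^ n := mul_comm _ _
    have hfac : ((n + 1 : ℕ) : ℝ) * (Nat.factorial n) = ((Nat.factorial (n+1)) : ℝ) := by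
      push_cast [Nat.factorial_succ]; ring
    have hexp : (0 : ℝ) < Real.exp 1 := Real.exp_pos 1
    have hfacpos : (0 : ℝ) < (Nat.factorial n) := by exact_mod_cast (Nat.factorial_pos n)
    calc ((n + 1 : ℕ) : ℝ) ^ (n + 1) = ((n : ℝ) + 1) * ((n : ℝ) + 1) ^ n := by
          push_cast; ring
      _ ≤ ((n : ℝ) + 1) * (Real.exp 1 * (n : ℝ) ^ n) := by
          apply mul_le_mul_of_nonneg_left hstep (by positivity)
      _ ≤ ((n : ℝ) + 1) * (Real.exp 1 * (Real.exp 1 ^ n * (Nat.factorial n))) := by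
          apply mul_le_mul_of_nonneg_left _ (by positivity)
          exact mul_le_mul_of_nonneg_left ih (le_of_lt hexp)
      _ = Real.exp 1 ^ (n + 1) * (((n + 1 : ℕ) : ℝ) * (Nat.factorial n)) := by push_cast; ring
      _ = Real.exp 1 ^ (n + 1) * ((Nat.factorial (n+1)) : ℝ) := by rw [hfac]

lemma aux_card_fix {m t : ℕ} (T : Finset (Fin m)) (s' : Fin t) :
    (univ.filter fun f : Fin m → Fin t => ∀ j ∈ T, f j = s').card ≤ t ^ (m - T.card) := by
  classical
  have hinj : Set.InjOn (fun f : Fin m → Fin t => fun x : ↥(Tᶜ) => f x)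
      ↑(univ.filter fun f : Fin m → Fin t => ∀ j ∈ T, f j = s') := by
    intro f hf g hg hfg
    simp only [coe_filter, Set.mem_setOf_eq] at hf hg
    funext j
    by_cases hj : j ∈ T
    · rw [hf.2 j hj, hg.2 j hj]
    · exact congrFun hfg ⟨j, by simpa using hj⟩
  calc (univ.filter fun f : Fin m → Fin t => ∀ j ∈ T, f j = s').card
      ≤ (univ : Finset (↥(Tᶜ) → Fin t)).card :=
        Finset.card_le_card_of_injOn _ (fun _ _ => mem_univ _) hinj
    _ = t ^ (m - T.card) := by
        rw [Finset.card_univ, Fintype.card_fun, Fintype.card_fin, Fintype.card_coe,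
          Finset.card_compl, Fintype.card_fin]

lemma aux_card_tail {m t : ℕ} (r : ℕ) (S : Finset (Fin m)) (s' : Fin t) :
    (univ.filter fun f : Fin m → Fin t => r ≤ (S.filter fun j => f j = s').card).card
      ≤ S.card.choose r * t ^ (m - r) := by
  classical
  have hsub : (univ.filter fun f : Fin m → Fin t => r ≤ (S.filter fun j => f j = s').card)
      ⊆ (S.powersetCard r).biUnion fun T =>
          univ.filter fun f : Fin m → Fin t => ∀ j ∈ T, f j = s' := by
    intro f hf
    simp only [mem_filter, mem_univ, true_and] at hf
    obtain ⟨T, hTsub, hTcard⟩ := Finset.exists_subset_card_eq hf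
    refine mem_biUnion.2 ⟨T, mem_powersetCard.2 ⟨hTsub.trans (filter_subset _ _), hTcard⟩, ?_⟩
    simp only [mem_filter, mem_univ, true_and]
    exact fun j hj => (mem_filter.1 (hTsub hj)).2
  calc _ ≤ ((S.powersetCard r).biUnion fun T =>
          univ.filter fun f : Fin m → Fin t => ∀ j ∈ T, f j = s').card := card_le_card hsub
    _ ≤ ∑ T ∈ S.powersetCard r,
          (univ.filter fun f : Fin m → Fin t => ∀ j ∈ T, f j = s').card := card_biUnion_le
    _ ≤ ∑ _T ∈ S.powersetCard r, t ^ (m - r) := by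
        refine sum_le_sum fun T hT => ?_
        have h := aux_card_fix T s'
        rwa [(mem_powersetCard.1 hT).2] at h
    _ = S.card.choose r * t ^ (m - r) := by
        rw [sum_const, card_powersetCard, smul_eq_mul]

lemma aux_card_pi {m t : ℕ} (P : (Fin m → Fin t) → Prop) [DecidablePred P] :
    (univ.filter fun B : Fin m → Fin m → Fin t => ∀ ℓ, P (B ℓ)).card
      = (univ.filter P).card ^ m := by
  classical
  calc (univ.filter fun B : Fin m → Fin m → Fin t => ∀ ℓ, P (B ℓ)).card
      = Fintype.card {B : Fin m → Fin m → Fin t // ∀ ℓ, P (B ℓ)} :=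
        (Fintype.card_subtype _).symm
    _ = Fintype.card (Fin m → {f : Fin m → Fin t // P f}) :=
        Fintype.card_congr Equiv.subtypePiEquivPi
    _ = Fintype.card {f : Fin m → Fin t // P f} ^ m := by
        rw [Fintype.card_fun, Fintype.card_fin]
    _ = (univ.filter P).card ^ m := by rw [Fintype.card_subtype]

lemma aux_numeric (m t K r : ℕ) (ht : 1 ≤ t) (hm : 2 ≤ m) (htm : t + 1 ≤ m)
    (hrm : r ≤ m)
    (hKr : 100 * Real.exp 1 * K ≤ 91 * t * r)
    (hlogr : 3 * Real.log m < (9 : ℝ) / 100 * r) :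
    (t + 1) * (t * t * (K.choose r * t ^ (m - r))) < t ^ m := by
  have hlogm : 0 < Real.log m := Real.log_pos (by exact_mod_cast hm)
  have hr0 : 0 < r := by
    by_contra h
    push_neg at h
    interval_cases r
    · simp at hlogr; linarith
  have htR : (0 : ℝ) < t := by exact_mod_cast ht
  have hrR : (0 : ℝ) < r := by exact_mod_cast hr0
  -- Step A: choose K r * r^r ≤ (e K)^r
  have hchoose : (K.choose r : ℝ) * (Nat.factorial r : ℝ) ≤ (K : ℝ) ^ r := by
    have h1 : Nat.factorial r * K.choose r ≤ K ^ r :=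
      (Nat.descFactorial_eq_factorial_mul_choose K r) ▸ Nat.descFactorial_le_pow K r
    calc (K.choose r : ℝ) * (Nat.factorial r : ℝ)
        = ((Nat.factorial r * K.choose r : ℕ) : ℝ) := by push_cast; ring
      _ ≤ ((K ^ r : ℕ) : ℝ) := by exact_mod_cast h1
      _ = (K : ℝ) ^ r := by push_cast; ring
  have hA : (K.choose r : ℝ) * (r : ℝ) ^ r ≤ (Real.exp 1 * K) ^ r := by
    have hfac := aux_pow_self_le_exp_mul_factorial r
    calc (K.choose r : ℝ) * (r : ℝ) ^ r
        ≤ (K.choose r : ℝ) * (Real.exp 1 ^ r * (Nat.factorial r : ℝ)) :=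
          mul_le_mul_of_nonneg_left hfac (by positivity)
      _ = Real.exp 1 ^ r * ((K.choose r : ℝ) * (Nat.factorial r : ℝ)) := by ring
      _ ≤ Real.exp 1 ^ r * (K : ℝ) ^ r := mul_le_mul_of_nonneg_left hchoose (by positivity)
      _ = (Real.exp 1 * K) ^ r := (mul_pow _ _ _).symm
  -- Step B
  have hB : (Real.exp 1 * K) ^ r ≤ ((91 : ℝ) / 100 * t * r) ^ r := by
    apply pow_le_pow_left₀ (by positivity)
    nlinarith [Real.exp_pos 1, (Nat.cast_nonneg K : (0:ℝ) ≤ K)]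
  have hch : (K.choose r : ℝ) ≤ ((91 : ℝ) / 100) ^ r * (t : ℝ) ^ r := by
    have h2 : (K.choose r : ℝ) * (r : ℝ) ^ r
        ≤ ((91 : ℝ) / 100) ^ r * (t : ℝ) ^ r * (r : ℝ) ^ r := by
      calc (K.choose r : ℝ) * (r : ℝ) ^ r ≤ ((91 : ℝ) / 100 * t * r) ^ r := hA.trans hB
        _ = ((91 : ℝ) / 100) ^ r * (t : ℝ) ^ r * (r : ℝ) ^ r := by rw [mul_pow, mul_pow]
    exact le_of_mul_le_mul_right h2 (by positivity)
  -- Step D : m^3 * (91/100)^r < 1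
  have hlog_ratio : (9 : ℝ) / 100 ≤ Real.log (100 / 91) := by
    have h := Real.log_le_sub_one_of_pos (show (0:ℝ) < 91/100 by norm_num)
    have : Real.log (100 / 91) = - Real.log (91 / 100) := by
      rw [← Real.log_inv]; norm_num
    rw [this]; linarith
  have hD : (m : ℝ) ^ 3 * ((91 : ℝ) / 100) ^ r < 1 := by
    have hm3 : (m : ℝ) ^ 3 < ((100 : ℝ) / 91) ^ r := by
      have e1 : (m : ℝ) ^ 3 = Real.exp ((3 : ℕ) * Real.log m) := by
        rw [← Real.log_pow, Real.exp_log (by positivity)]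
      have e2 : ((100 : ℝ) / 91) ^ r = Real.exp ((r : ℕ) * Real.log (100 / 91)) := by
        rw [← Real.log_pow, Real.exp_log (by positivity)]
      rw [e1, e2]
      apply Real.exp_lt_exp.2
      have h9 : (9 : ℝ) / 100 * r ≤ (r : ℕ) * Real.log (100 / 91) := by
        have := mul_le_mul_of_nonneg_right hlog_ratio (le_of_lt hrR)
        push_cast
        nlinarith
      calc ((3 : ℕ) : ℝ) * Real.log m = 3 * Real.log m := by norm_num
        _ < (9 : ℝ) / 100 * r := hlogr
        _ ≤ (r : ℕ) * Real.log (100 / 91) := h9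
    have hcancel : ((100 : ℝ) / 91) ^ r * ((91 : ℝ) / 100) ^ r = 1 := by
      rw [← mul_pow]; norm_num
    calc (m : ℝ) ^ 3 * ((91 : ℝ) / 100) ^ r
        < ((100 : ℝ) / 91) ^ r * ((91 : ℝ) / 100) ^ r := by
          apply mul_lt_mul_of_pos_right hm3 (by positivity)
      _ = 1 := hcancel
  -- Step E : (t+1) * t * t * choose < t^r
  have hE : ((t : ℝ) + 1) * t * t * (K.choose r : ℝ) < (t : ℝ) ^ r := by
    have hmR : (1 : ℝ) ≤ m := by exact_mod_cast (by omega : 1 ≤ m)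
    have htmR : (t : ℝ) + 1 ≤ m := by exact_mod_cast htm
    have htmR2 : (t : ℝ) ≤ m := by linarith
    have h5 : ((t : ℝ) + 1) * t * t ≤ (m : ℝ) ^ 3 := by
      have ha : ((t : ℝ) + 1) * t ≤ (m : ℝ) * m :=
        mul_le_mul htmR htmR2 (le_of_lt htR) (by positivity)
      have hb : (((t : ℝ) + 1) * t) * t ≤ ((m : ℝ) * m) * m :=
        mul_le_mul ha htmR2 (le_of_lt htR) (by positivity)
      calc ((t : ℝ) + 1) * t * t ≤ (m : ℝ) * m * m := hb
        _ = (m : ℝ) ^ 3 := by ring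
    calc ((t : ℝ) + 1) * t * t * (K.choose r : ℝ)
        ≤ (m : ℝ) ^ 3 * (((91 : ℝ) / 100) ^ r * (t : ℝ) ^ r) := by
          apply mul_le_mul h5 hch (by positivity) (by positivity)
      _ = ((m : ℝ) ^ 3 * ((91 : ℝ) / 100) ^ r) * (t : ℝ) ^ r := by ring
      _ < 1 * (t : ℝ) ^ r := by apply mul_lt_mul_of_pos_right hD (by positivity)
      _ = (t : ℝ) ^ r := one_mul _
  -- conclude in ℕ
  have hfinal : ((t + 1) * (t * t * (K.choose r * t ^ (m - r))) : ℝ) < ((t : ℝ)) ^ m := by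
    have hpowsplit : (t : ℝ) ^ m = (t : ℝ) ^ r * (t : ℝ) ^ (m - r) := by
      rw [← pow_add]; congr 1; omega
    rw [hpowsplit]
    calc ((t + 1) * (t * t * (K.choose r * t ^ (m - r))) : ℝ)
        = (((t : ℝ) + 1) * t * t * (K.choose r : ℝ)) * (t : ℝ) ^ (m - r) := by ring
      _ < (t : ℝ) ^ r * (t : ℝ) ^ (m - r) := by
          apply mul_lt_mul_of_pos_right hE (by positivity)
  have := hfinal
  push_cast at this
  exact_mod_cast this

set_option maxHeartbeats 1000000 in
/-- existence of a regular list of `m` partitions of `[m]` into `t` buckets: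
for every partial partition `Bp : [m] → [t] ∪ {⊥}`, some partition `B⁽ˡ⁾` from the list
satisfies that each bucket of `Bp` of size at most `C·m/t` meets each bucket of `B⁽ˡ⁾`
in at most `3C·m/t²` items. -/
theorem exists_regular_partitions :
    ∃ c : ℝ, 0 < c ∧
      ∀ (C : ℝ), 1 ≤ C → ∀ m t : ℕ, 2 ≤ m → 1 ≤ t →
        c * (t : ℝ) ^ 2 * Real.log m ≤ (m : ℝ) →
        ∃ B : Fin m → Fin m → Fin t,
          ∀ Bp : Fin m → Option (Fin t),
            ∃ ℓ : Fin m, ∀ s s' : Fin t,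
              ((Finset.univ.filter fun j => Bp j = some s).card : ℝ) ≤ C * m / t →
              ((Finset.univ.filter fun j => B ℓ j = s' ∧ Bp j = some s).card : ℝ)
                ≤ 3 * C * m / (t : ℝ) ^ 2 := by
  classical
  refine ⟨100, by norm_num, ?_⟩
  intro C hC m t hm ht hmt
  have hmR : (2 : ℝ) ≤ m := by exact_mod_cast hm
  have htR : (1 : ℝ) ≤ t := by exact_mod_cast ht
  have hm0 : (0 : ℝ) < m := by linarith
  have ht0 : (0 : ℝ) < t := by linarith
  have hC0 : (0 : ℝ) < C := by linarith
  have hlogm : 0 < Real.log m := Real.log_pos (by linarith)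
  have hm1 : 1 ≤ m := by omega
  by_cases htriv : (m : ℝ) ≤ 3 * C * m / (t : ℝ) ^ 2
  · -- trivial case : the bound exceeds m
    refine ⟨fun _ _ => ⟨0, by omega⟩, fun Bp => ⟨⟨0, by omega⟩, fun s s' _ => ?_⟩⟩
    calc ((Finset.univ.filter fun j => (fun _ _ => (⟨0, by omega⟩ : Fin t)) (⟨0, by omega⟩ : Fin m) j = s' ∧ Bp j = some s).card : ℝ)
        ≤ ((Finset.univ : Finset (Fin m)).card : ℝ) := by
          exact_mod_cast Finset.card_filter_le _ _
      _ = (m : ℝ) := by rw [Finset.card_univ, Fintype.card_fin]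
      _ ≤ 3 * C * m / (t : ℝ) ^ 2 := htriv
  push_neg at htriv
  -- main case
  set x : ℝ := 3 * C * m / (t : ℝ) ^ 2 with hxdef
  have hx0 : 0 ≤ x := by positivity
  set r : ℕ := ⌊x⌋₊ + 1 with hrdef
  set K : ℕ := ⌊C * m / (t : ℝ)⌋₊ with hKdef
  set N : ℕ := K.choose r * t ^ (m - r) with hNdef
  have hxr : x < r := by
    have := Nat.lt_floor_add_one x
    push_cast
    exact_mod_cast this
  have hrm : r ≤ m := by
    have : ⌊x⌋₊ < m := (Nat.floor_lt hx0).2 htriv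
    omega
  have hlog2 : (0.6931471803 : ℝ) < Real.log 2 := Real.log_two_gt_d9
  have hlogm2 : Real.log 2 ≤ Real.log m := Real.log_le_log (by norm_num) hmR
  have htm : t + 1 ≤ m := by
    have htmR : (t : ℝ) < m := by nlinarith
    have : t < m := by exact_mod_cast htmR
    omega
  have hKC : (K : ℝ) ≤ C * m / t := Nat.floor_le (by positivity)
  have hrx : 3 * C * (m : ℝ) < r * (t : ℝ) ^ 2 := by
    have := (div_lt_iff₀ (by positivity : (0:ℝ) < (t:ℝ)^2)).1 hxr
    linarith
  have hKr : 100 * Real.exp 1 * (K : ℝ) ≤ 91 * t * r := by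
    have he : Real.exp 1 < 2.7182818286 := Real.exp_one_lt_d9
    have he0 : (0 : ℝ) < Real.exp 1 := Real.exp_pos 1
    have hK0 : (0 : ℝ) ≤ K := Nat.cast_nonneg K
    have hKt : (K : ℝ) * t ≤ C * m := (le_div_iff₀ ht0).1 hKC
    have ha : 100 * Real.exp 1 * ((K : ℝ) * t) ≤ 100 * Real.exp 1 * (C * m) :=
      mul_le_mul_of_nonneg_left hKt (by positivity)
    have hb : 100 * Real.exp 1 * (C * (m : ℝ)) ≤ 272 * (C * m) := by
      nlinarith [mul_nonneg hC0.le hm0.le]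
    have h4 : 100 * Real.exp 1 * (K : ℝ) * t ≤ 272 * (C * m) := by nlinarith [ha, hb]
    have h5 : 272 * (C * (m : ℝ)) ≤ 91 * (r : ℝ) * (t : ℝ) ^ 2 := by nlinarith
    have h6 : (100 * Real.exp 1 * (K : ℝ)) * t ≤ (91 * t * r) * t := by nlinarith
    exact le_of_mul_le_mul_right h6 ht0
  have hlogr : 3 * Real.log m < (9 : ℝ) / 100 * r := by
    have hCm : 3 * (m : ℝ) ≤ 3 * C * m := by nlinarith
    have h2 : 300 * (t : ℝ) ^ 2 * Real.log m ≤ 3 * C * m := by nlinarith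
    have ht2 : (0 : ℝ) < (t : ℝ) ^ 2 := by positivity
    have h4 : (300 * Real.log m) * (t : ℝ) ^ 2 < (r : ℝ) * (t : ℝ) ^ 2 := by nlinarith
    have h3 : 300 * Real.log m < (r : ℝ) := lt_of_mul_lt_mul_right h4 ht2.le
    linarith
  -- the bad predicate on a single partition
  have key : ∃ B : Fin m → Fin m → Fin t,
      ¬ ∃ Bp : Fin m → Option (Fin t), ∀ ℓ, ∃ s s' : Fin t,
        ((Finset.univ.filter fun j => Bp j = some s).card : ℝ) ≤ C * m / t ∧
        r ≤ (Finset.univ.filter fun j => B ℓ j = s' ∧ Bp j = some s).card := by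
    by_contra hall
    push_neg at hall
    -- count bad families
    have hpair : ∀ (Bp : Fin m → Option (Fin t)) (s s' : Fin t),
        (univ.filter fun f : Fin m → Fin t =>
          ((Finset.univ.filter fun j => Bp j = some s).card : ℝ) ≤ C * m / t ∧
          r ≤ (Finset.univ.filter fun j => f j = s' ∧ Bp j = some s).card).card ≤ N := by
      intro Bp s s'
      by_cases hsm : ((Finset.univ.filter fun j => Bp j = some s).card : ℝ) ≤ C * m / t
      · set S : Finset (Fin m) := Finset.univ.filter fun j => Bp j = some s with hSdef
        have hSK : S.card ≤ K := Nat.le_floor hsm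
        have hsub : (univ.filter fun f : Fin m → Fin t =>
            ((Finset.univ.filter fun j => Bp j = some s).card : ℝ) ≤ C * m / t ∧
            r ≤ (Finset.univ.filter fun j => f j = s' ∧ Bp j = some s).card)
            ⊆ univ.filter fun f : Fin m → Fin t => r ≤ (S.filter fun j => f j = s').card := by
          intro f hf
          simp only [mem_filter, mem_univ, true_and] at hf ⊢
          have hrw : (Finset.univ.filter fun j => f j = s' ∧ Bp j = some s)
              = S.filter fun j => f j = s' := by
            ext j
            simp only [hSdef, mem_filter, mem_univ, true_and]
            tauto
          rw [← hrw]
          exact hf.2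
        calc _ ≤ (univ.filter fun f : Fin m → Fin t =>
                r ≤ (S.filter fun j => f j = s').card).card := card_le_card hsub
          _ ≤ S.card.choose r * t ^ (m - r) := aux_card_tail r S s'
          _ ≤ N := Nat.mul_le_mul_right _ (Nat.choose_le_choose r hSK)
      · have : (univ.filter fun f : Fin m → Fin t =>
            ((Finset.univ.filter fun j => Bp j = some s).card : ℝ) ≤ C * m / t ∧
            r ≤ (Finset.univ.filter fun j => f j = s' ∧ Bp j = some s).card) = ∅ := by
          apply filter_false_of_mem
          exact fun f _ hc => hsm hc.1
        rw [this]
        exact Nat.zero_le N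
    have hbp : ∀ Bp : Fin m → Option (Fin t),
        (univ.filter fun f : Fin m → Fin t => ∃ s s' : Fin t,
          ((Finset.univ.filter fun j => Bp j = some s).card : ℝ) ≤ C * m / t ∧
          r ≤ (Finset.univ.filter fun j => f j = s' ∧ Bp j = some s).card).card
          ≤ t * t * N := by
      intro Bp
      have hsub : (univ.filter fun f : Fin m → Fin t => ∃ s s' : Fin t,
          ((Finset.univ.filter fun j => Bp j = some s).card : ℝ) ≤ C * m / t ∧
          r ≤ (Finset.univ.filter fun j => f j = s' ∧ Bp j = some s).card)
          ⊆ (univ ×ˢ univ : Finset (Fin t × Fin t)).biUnion fun p =>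
              univ.filter fun f : Fin m → Fin t =>
                ((Finset.univ.filter fun j => Bp j = some p.1).card : ℝ) ≤ C * m / t ∧
                r ≤ (Finset.univ.filter fun j => f j = p.2 ∧ Bp j = some p.1).card := by
        intro f hf
        simp only [mem_filter, mem_univ, true_and] at hf
        obtain ⟨s, s', h1, h2⟩ := hf
        exact mem_biUnion.2 ⟨(s, s'), by simp, by simp only [mem_filter, mem_univ, true_and]; exact ⟨h1, h2⟩⟩
      calc _ ≤ _ := card_le_card hsub
        _ ≤ ∑ p ∈ (univ ×ˢ univ : Finset (Fin t × Fin t)),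
              (univ.filter fun f : Fin m → Fin t =>
                ((Finset.univ.filter fun j => Bp j = some p.1).card : ℝ) ≤ C * m / t ∧
                r ≤ (Finset.univ.filter fun j => f j = p.2 ∧ Bp j = some p.1).card).card :=
            card_biUnion_le
        _ ≤ ∑ _p ∈ (univ ×ˢ univ : Finset (Fin t × Fin t)), N :=
            sum_le_sum fun p _ => hpair Bp p.1 p.2
        _ = t * t * N := by
            rw [sum_const, smul_eq_mul, card_product, card_univ, Fintype.card_fin]
    -- all families are bad for some Bp
    have hcover : (univ : Finset (Fin m → Fin m → Fin t))
        ⊆ (univ : Finset (Fin m → Option (Fin t))).biUnion fun Bp =>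
            univ.filter fun B : Fin m → Fin m → Fin t => ∀ ℓ, ∃ s s' : Fin t,
              ((Finset.univ.filter fun j => Bp j = some s).card : ℝ) ≤ C * m / t ∧
              r ≤ (Finset.univ.filter fun j => B ℓ j = s' ∧ Bp j = some s).card := by
      intro B _
      obtain ⟨Bp, hBp⟩ := hall B
      exact mem_biUnion.2 ⟨Bp, mem_univ _, by simp only [mem_filter, mem_univ, true_and]; exact hBp⟩
    have hcard : (univ : Finset (Fin m → Fin m → Fin t)).card ≤ (t + 1) ^ m * (t * t * N) ^ m := by
      calc (univ : Finset (Fin m → Fin m → Fin t)).card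
          ≤ ((univ : Finset (Fin m → Option (Fin t))).biUnion fun Bp =>
              univ.filter fun B : Fin m → Fin m → Fin t => ∀ ℓ, ∃ s s' : Fin t,
                ((Finset.univ.filter fun j => Bp j = some s).card : ℝ) ≤ C * m / t ∧
                r ≤ (Finset.univ.filter fun j => B ℓ j = s' ∧ Bp j = some s).card).card :=
            card_le_card hcover
        _ ≤ ∑ Bp ∈ (univ : Finset (Fin m → Option (Fin t))),
              (univ.filter fun B : Fin m → Fin m → Fin t => ∀ ℓ, ∃ s s' : Fin t,
                ((Finset.univ.filter fun j => Bp j = some s).card : ℝ) ≤ C * m / t ∧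
                r ≤ (Finset.univ.filter fun j => B ℓ j = s' ∧ Bp j = some s).card).card :=
            card_biUnion_le
        _ ≤ ∑ _Bp ∈ (univ : Finset (Fin m → Option (Fin t))), (t * t * N) ^ m := by
            refine sum_le_sum fun Bp _ => ?_
            rw [aux_card_pi (fun f : Fin m → Fin t => ∃ s s' : Fin t,
              ((Finset.univ.filter fun j => Bp j = some s).card : ℝ) ≤ C * m / t ∧
              r ≤ (Finset.univ.filter fun j => f j = s' ∧ Bp j = some s).card)]
            exact Nat.pow_le_pow_left (hbp Bp) m
        _ = (t + 1) ^ m * (t * t * N) ^ m := by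
            rw [sum_const, smul_eq_mul, card_univ, Fintype.card_fun, Fintype.card_option,
              Fintype.card_fin, Fintype.card_fin]
    have hlt : (t + 1) ^ m * (t * t * N) ^ m < (univ : Finset (Fin m → Fin m → Fin t)).card := by
      have hnum : (t + 1) * (t * t * N) < t ^ m :=
        aux_numeric m t K r ht hm htm hrm hKr hlogr
      calc (t + 1) ^ m * (t * t * N) ^ m = ((t + 1) * (t * t * N)) ^ m := (mul_pow _ _ _).symm
        _ < (t ^ m) ^ m := Nat.pow_lt_pow_left hnum (by omega)
        _ = (univ : Finset (Fin m → Fin m → Fin t)).card := by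
            rw [card_univ, Fintype.card_fun, Fintype.card_fun, Fintype.card_fin, Fintype.card_fin]
    exact absurd hcard (not_le.2 hlt)
  obtain ⟨B, hB⟩ := key
  push_neg at hB
  refine ⟨B, fun Bp => ?_⟩
  obtain ⟨ℓ, hℓ⟩ := hB Bp
  refine ⟨ℓ, fun s s' hsmall => ?_⟩
  have hlt := hℓ s s' hsmall
  have hle : (Finset.univ.filter fun j => B ℓ j = s' ∧ Bp j = some s).card ≤ ⌊x⌋₊ := by omega
  calc ((Finset.univ.filter fun j => B ℓ j = s' ∧ Bp j = some s).card : ℝ)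
      ≤ (⌊x⌋₊ : ℝ) := by exact_mod_cast hle
    _ ≤ x := Nat.floor_le hx0
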